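/- Let A be a unital associative algebra over a field F and let R be a Rota–Baxter operator of weight −1 on A. Set a = R(1) and, for natural numbers r, s, let H_{r,s}(x) = Π_{k=0}^{r+s−1}(x − r + k). Then for all r, s ≥ 0: (r+s)! · ((R − id)^r ∘ R^s)(1) = H_{r,s}(a). -/

import Mathlib

/-- The polynomial `H_{r,s}(x) = (x−r)(x−r+1)⋯x(x+1)⋯(x+s−1) = Π_{k=0}^{r+s−1} (x−r+k)`. -/
noncomputable def Hpoly (F : Type*) [Field F] (r s : ℕ) : Polynomial F :=
  ∏ k ∈ Finset.range (r + s), (Polynomial.X - (r : Polynomial F) + (k : Polynomial F))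

namespace RBaux

open Polynomial

variable {F : Type*} [Field F] {A : Type*} [Ring A] [Algebra F A]

lemma Hpoly_zero : Hpoly F 0 0 = 1 := by
  simp [Hpoly]

lemma Hpoly_succ_right (r s : ℕ) :
    Hpoly F r (s + 1) = Hpoly F r s * (X + (s : Polynomial F)) := by
  have h : r + (s + 1) = (r + s) + 1 := by omega
  simp only [Hpoly, h, Finset.prod_range_succ]
  congr 1
  push_cast
  ring

lemma Hpoly_succ_left (r s : ℕ) :
    Hpoly F (r + 1) s = Hpoly F r s * (X - ((r : Polynomial F) + 1)) := by
  have h : (r + 1) + s = (r + s) + 1 := by omega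
  simp only [Hpoly, h, Finset.prod_range_succ']
  congr 1
  · apply Finset.prod_congr rfl
    intro k _
    push_cast
    ring
  · push_cast
    ring

lemma aeval_comm (a : A) (p q : Polynomial F) :
    aeval a p * aeval a q = aeval a q * aeval a p := by
  rw [← map_mul, ← map_mul, mul_comm]

variable {R : A →ₗ[F] A}

lemma hR' (hR : ∀ x y : A, R x * R y = R (R x * y + x * R y + (-1 : F) • (x * y)))
    (x y : A) : R x * R y = R (R x * y) + R (x * R y) - R (x * y) := by
  rw [hR x y, neg_one_smul, ← sub_eq_add_neg, map_sub, map_add]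

lemma hS' (hR : ∀ x y : A, R x * R y = R (R x * y + x * R y + (-1 : F) • (x * y)))
    (x y : A) :
    (R - LinearMap.id : A →ₗ[F] A) x * (R - LinearMap.id : A →ₗ[F] A) y
      = (R - LinearMap.id : A →ₗ[F] A) ((R - LinearMap.id : A →ₗ[F] A) x * y)
        + (R - LinearMap.id : A →ₗ[F] A) (x * (R - LinearMap.id : A →ₗ[F] A) y)
        + (R - LinearMap.id : A →ₗ[F] A) (x * y) := by
  have h := hR' hR x y
  simp only [LinearMap.sub_apply, LinearMap.id_apply, sub_mul, mul_sub, map_sub]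
  rw [h]
  abel

/-- Abstract R-step. -/
lemma stepR_abstract
    (hR : ∀ x y : A, R x * R y = R (R x * y + x * R y + (-1 : F) • (x * y)))
    (P : A) (c : F) (n1 : F)
    (hcomm : R 1 * P = P * R 1)
    (hK : n1 • R P = (R 1 + algebraMap F A c) * P) :
    (n1 + 1) • R (P * (R 1 + algebraMap F A c))
      = (R 1 + algebraMap F A c + 1) * (P * (R 1 + algebraMap F A c)) := by
  set a := R 1 with ha
  set P' := P * (a + algebraMap F A c) with hP'
  have hcomm' : (a + algebraMap F A c) * P = P' := by
    rw [hP', add_mul, mul_add, hcomm, Algebra.commutes]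
  have hK' : n1 • R P = P' := hK.trans hcomm'
  have e2 : a * P = P' - c • P := by
    have h1 : P' = a * P + c • P := by
      rw [hP', mul_add, ← hcomm, ← Algebra.commutes c P, Algebra.smul_def]
    rw [h1]; abel
  have e1 : a * R P = R (a * P) + R (R P) - R P := by
    simpa using hR' hR 1 P
  have e3 : R (a * P) = R P' - c • R P := by rw [e2, map_sub, map_smul]
  have e4 : a * P' = n1 • R P' - c • P' + R P' - P' := by
    calc a * P' = a * (n1 • R P) := by rw [hK']
      _ = n1 • (a * R P) := mul_smul_comm _ _ _
      _ = n1 • (R (a * P) + R (R P) - R P) := by rw [e1]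
      _ = n1 • R (a * P) + n1 • R (R P) - n1 • R P := by rw [smul_sub, smul_add]
      _ = (n1 • R P' - c • P') + R P' - P' := by
          have e3b : n1 • R (R P) = R P' := by rw [← map_smul, hK']
          rw [e3, smul_sub, smul_comm n1 c, hK', e3b]
  have e5 : (a + algebraMap F A c + 1) * P' = a * P' + c • P' + P' := by
    rw [add_mul, add_mul, one_mul, Algebra.smul_def]
  rw [e5, e4, add_smul, one_smul]
  abel

/-- Abstract S-step (S = R - id is Rota-Baxter of weight +1). -/
lemma stepS_abstract
    (hR : ∀ x y : A, R x * R y = R (R x * y + x * R y + (-1 : F) • (x * y)))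
    (P : A) (c : F) (n1 : F)
    (hcomm : R 1 * P = P * R 1)
    (hK2 : n1 • (R - LinearMap.id : A →ₗ[F] A) P = (R 1 - (algebraMap F A c + 1)) * P) :
    (n1 + 1) • (R - LinearMap.id : A →ₗ[F] A) (P * (R 1 - (algebraMap F A c + 1)))
      = (R 1 - (algebraMap F A c + 1) - 1)
          * (P * (R 1 - (algebraMap F A c + 1))) := by
  set S : A →ₗ[F] A := R - LinearMap.id with hS
  set a := R 1 with ha
  set P'' := P * (a - (algebraMap F A c + 1)) with hP''
  have hb : S 1 = a - 1 := by simp [hS, ha]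
  have hcomm' : (a - (algebraMap F A c + 1)) * P = P'' := by
    rw [hP'', sub_mul, mul_sub, hcomm, add_mul, mul_add, Algebra.commutes, one_mul, mul_one]
  have hK2' : n1 • S P = P'' := hK2.trans hcomm'
  have e2 : S 1 * P = P'' + c • P := by
    rw [hb, ← hcomm', sub_mul, sub_mul, add_mul, one_mul, Algebra.smul_def]
    abel
  have e1 : S 1 * S P = S (S 1 * P) + S (S P) + S P := by
    have h := hS' hR (1 : A) P
    rw [one_mul, one_mul] at h
    exact h
  have e3 : S (S 1 * P) = S P'' + c • S P := by rw [e2, map_add, map_smul]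
  have e4 : S 1 * P'' = n1 • S P'' + c • P'' + S P'' + P'' := by
    calc S 1 * P'' = S 1 * (n1 • S P) := by rw [hK2']
      _ = n1 • (S 1 * S P) := mul_smul_comm _ _ _
      _ = n1 • (S (S 1 * P) + S (S P) + S P) := by rw [e1]
      _ = n1 • S (S 1 * P) + n1 • S (S P) + n1 • S P := by rw [smul_add, smul_add]
      _ = (n1 • S P'' + c • P'') + S P'' + P'' := by
          have e3b : n1 • S (S P) = S P'' := by rw [← map_smul, hK2']
          rw [e3, smul_add, smul_comm n1 c, hK2', e3b]
  have e5 : (a - (algebraMap F A c + 1) - 1) * P'' = (S 1) * P'' - c • P'' - P'' := by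
    rw [hb, sub_mul, sub_mul, sub_mul, add_mul, one_mul, Algebra.smul_def]
    abel
  rw [e5, e4, add_smul, one_smul]
  abel

/-- The key identity K1. -/
lemma K1 (hR : ∀ x y : A, R x * R y = R (R x * y + x * R y + (-1 : F) • (x * y)))
    (r s : ℕ) :
    ((r + s + 1 : ℕ) : F) • R (aeval (R 1) (Hpoly F r s))
      = (R 1 + (s : A)) * aeval (R 1) (Hpoly F r s) := by
  induction r with
  | zero =>
    induction s with
    | zero => simp [Hpoly_zero]
    | succ s ih =>
      -- R-step at r = 0
      have hcomm : R 1 * aeval (R 1) (Hpoly F 0 s) = aeval (R 1) (Hpoly F 0 s) * R 1 := by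
        simpa using aeval_comm (R 1) (X : Polynomial F) (Hpoly F 0 s)
      have hK : ((0 + s + 1 : ℕ) : F) • R (aeval (R 1) (Hpoly F 0 s))
          = (R 1 + algebraMap F A ((s : ℕ) : F)) * aeval (R 1) (Hpoly F 0 s) := by
        rw [map_natCast (algebraMap F A) s]; exact ih
      have h := stepR_abstract hR (aeval (R 1) (Hpoly F 0 s)) ((s : ℕ) : F)
        (((0 + s + 1 : ℕ) : F)) hcomm hK
      have haev : aeval (R 1) (Hpoly F 0 (s + 1))
          = aeval (R 1) (Hpoly F 0 s) * (R 1 + algebraMap F A ((s : ℕ) : F)) := by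
        rw [Hpoly_succ_right, map_mul, map_add, aeval_X, Polynomial.aeval_natCast,
          ← map_natCast (algebraMap F A) s]
      have hcast : ((0 + (s + 1) + 1 : ℕ) : F) = ((0 + s + 1 : ℕ) : F) + 1 := by
        push_cast; ring_nf
      have hcast2 : ((s + 1 : ℕ) : A) = algebraMap F A ((s : ℕ) : F) + 1 := by
        rw [map_natCast (algebraMap F A) s]; push_cast; ring_nf
      rw [hcast, haev, hcast2, ← add_assoc]
      exact h
  | succ r ih =>
    -- S-step
    set P := aeval (R 1) (Hpoly F r s) with hP
    have hcomm : R 1 * P = P * R 1 := by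
      simpa using aeval_comm (R 1) (X : Polynomial F) (Hpoly F r s)
    -- K2 from K1 (ih)
    have hK2 : ((r + s + 1 : ℕ) : F) • (R - LinearMap.id : A →ₗ[F] A) P
        = (R 1 - (algebraMap F A ((r : ℕ) : F) + 1)) * P := by
      have hid : (R - LinearMap.id : A →ₗ[F] A) P = R P - P := by simp
      have hsc : (algebraMap F A) ((r + s + 1 : ℕ) : F) = ((r + s + 1 : ℕ) : A) :=
        map_natCast (algebraMap F A) _
      have hsc2 : R 1 + (s : A) - ((r + s + 1 : ℕ) : A)
          = R 1 - (algebraMap F A ((r : ℕ) : F) + 1) := by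
        rw [map_natCast (algebraMap F A) r, Nat.cast_add, Nat.cast_add, Nat.cast_one]
        abel
      rw [hid, smul_sub, ih, Algebra.smul_def, hsc, ← sub_mul, hsc2]
    have h := stepS_abstract hR P ((r : ℕ) : F) (((r + s + 1 : ℕ) : F)) hcomm hK2
    have haev : aeval (R 1) (Hpoly F (r + 1) s)
        = P * (R 1 - (algebraMap F A ((r : ℕ) : F) + 1)) := by
      rw [Hpoly_succ_left, map_mul, map_sub, map_add, aeval_X, Polynomial.aeval_one,
        Polynomial.aeval_natCast, ← map_natCast (algebraMap F A) r]
    set P'' := P * (R 1 - (algebraMap F A ((r : ℕ) : F) + 1)) with hP''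
    -- convert K2 (r+1) to K1 (r+1)
    have hcast : (((r + 1) + s + 1 : ℕ) : F) = ((r + s + 1 : ℕ) : F) + 1 := by
      push_cast; ring_nf
    rw [hcast, haev]
    have hid : (((r + s + 1 : ℕ) : F) + 1) • R P''
        = (((r + s + 1 : ℕ) : F) + 1) • (R - LinearMap.id : A →ₗ[F] A) P''
          + (((r + s + 1 : ℕ) : F) + 1) • P'' := by
      have : R P'' = (R - LinearMap.id : A →ₗ[F] A) P'' + P'' := by simp
      rw [this, smul_add]
    have hsc : (algebraMap F A) (((r + s + 1 : ℕ) : F) + 1) = ((r + s + 1 : ℕ) : A) + 1 := by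
      rw [map_add, map_one, map_natCast (algebraMap F A)]
    have hsc2 : R 1 - (algebraMap F A ((r : ℕ) : F) + 1) - 1 + (((r + s + 1 : ℕ) : A) + 1)
        = R 1 + (s : A) := by
      rw [map_natCast (algebraMap F A) r, Nat.cast_add, Nat.cast_add, Nat.cast_one]
      abel
    rw [hid, h, Algebra.smul_def, hsc, ← add_mul, hsc2]

lemma K2 (hR : ∀ x y : A, R x * R y = R (R x * y + x * R y + (-1 : F) • (x * y)))
    (r s : ℕ) :
    ((r + s + 1 : ℕ) : F) • (R - LinearMap.id : A →ₗ[F] A) (aeval (R 1) (Hpoly F r s))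
      = (R 1 - ((r : A) + 1)) * aeval (R 1) (Hpoly F r s) := by
  have ih := K1 hR r s
  have hid : (R - LinearMap.id : A →ₗ[F] A) (aeval (R 1) (Hpoly F r s))
      = R (aeval (R 1) (Hpoly F r s)) - aeval (R 1) (Hpoly F r s) := by simp
  have hsc : (algebraMap F A) ((r + s + 1 : ℕ) : F) = ((r + s + 1 : ℕ) : A) :=
    map_natCast (algebraMap F A) _
  have hsc2 : R 1 + (s : A) - ((r + s + 1 : ℕ) : A) = R 1 - ((r : A) + 1) := by
    rw [Nat.cast_add, Nat.cast_add, Nat.cast_one]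
    abel
  rw [hid, smul_sub, ih, Algebra.smul_def, hsc, ← sub_mul, hsc2]

end RBaux

/-- For a unital associative algebra `A` over a field `F` and a Rota–Baxter
operator `R` of weight `−1` on `A` with `a = R(1)`, one has
`(r+s)! · ((R − id)^r ∘ R^s)(1) = H_{r,s}(a)` for all `r, s ≥ 0`. -/
theorem rb_H_formula
    {F : Type*} [Field F] {A : Type*} [Ring A] [Algebra F A]
    (R : A →ₗ[F] A)
    (hR : ∀ x y : A, R x * R y = R (R x * y + x * R y + (-1 : F) • (x * y))) :
    ∀ r s : ℕ,
      ((Nat.factorial (r + s) : F))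
          • (((R - LinearMap.id) ^ r : A →ₗ[F] A) ((R ^ s) (1 : A)))
        = Polynomial.aeval (R (1 : A)) (Hpoly F r s) := by
  intro r s
  open Polynomial RBaux in
  have hcRS : Commute R (R - LinearMap.id) := by
    have h1 : (LinearMap.id : A →ₗ[F] A) = 1 := rfl
    rw [h1]
    exact (Commute.refl R).sub_right (Commute.one_right R)
  induction r with
  | zero =>
    induction s with
    | zero => simp [RBaux.Hpoly_zero]
    | succ s ih =>
      have h1 : (R ^ (s + 1)) (1 : A) = R ((R ^ s) (1 : A)) := by
        rw [pow_succ']; rfl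
      have h2 : ((R - LinearMap.id) ^ 0 : A →ₗ[F] A) (R ((R ^ s) (1 : A)))
          = R (((R - LinearMap.id) ^ 0 : A →ₗ[F] A) ((R ^ s) (1 : A))) := by
        simp
      have h3 : (0 + (s + 1)).factorial = (0 + s + 1) * (0 + s).factorial := by
        simp [Nat.factorial_succ]
      rw [h1, h2, h3, Nat.cast_mul, mul_smul, ← map_smul, ih, RBaux.K1 hR]
      rw [RBaux.Hpoly_succ_right, map_mul, map_add, Polynomial.aeval_X, map_natCast]
      have hc := RBaux.aeval_comm (R 1) (Polynomial.X + (s : Polynomial F)) (Hpoly F 0 s)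
      simp only [map_add, Polynomial.aeval_X, Polynomial.aeval_natCast] at hc
      exact hc
  | succ r ih =>
    have h1 : ((R - LinearMap.id) ^ (r + 1) : A →ₗ[F] A) ((R ^ s) (1 : A))
        = (R - LinearMap.id : A →ₗ[F] A)
            (((R - LinearMap.id) ^ r : A →ₗ[F] A) ((R ^ s) (1 : A))) := by
      rw [pow_succ']; rfl
    have h3 : ((r + 1) + s).factorial = (r + s + 1) * (r + s).factorial := by
      rw [show (r+1) + s = (r + s) + 1 by omega, Nat.factorial_succ]
    rw [h1, h3, Nat.cast_mul, mul_smul, ← map_smul, ih, RBaux.K2 hR]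
    rw [RBaux.Hpoly_succ_left, map_mul, map_sub, map_add, Polynomial.aeval_X,
      Polynomial.aeval_one, Polynomial.aeval_natCast]
    have hc := RBaux.aeval_comm (R 1) (Polynomial.X - ((r : Polynomial F) + 1)) (Hpoly F r s)
    simp only [map_sub, map_add, Polynomial.aeval_X, Polynomial.aeval_one,
      Polynomial.aeval_natCast] at hc
    exact hc
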